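/- arXiv:1907.03661 — 4 statements merged into one kernel-verified Lean document; each statement's English description precedes it below -/
import Mathlib

section
/- Let M be a von Neumann algebra and (α_t) a weak*-continuous one-parameter automorphism group of M by *-automorphisms. Then for each x ∈ M, the map ℝ → M, t ↦ α_t(x), is continuous for the σ-strong* topology: for every normal positive functional ω ∈ M_*⁺, both ⟨(α_t(x)−x)*(α_t(x)−x), ω⟩ → 0 and ⟨(α_t(x)−x)(α_t(x)−x)*, ω⟩ → 0 as t → 0. -/
open scoped ComplexOrder
open Filter Topology

/-- For a weak*-continuous one-parameter automorphism group `(αₜ)` of a von Neumann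
algebra `M` (here: a C*-algebra together with a separating family `P` of (normal,
positive where required) functionals, closed under the module actions of `M`, against
which all orbit maps are continuous), each orbit map `t ↦ αₜ(x)` is `σ`-strong*
continuous: for every positive `ω ∈ P` and `x ∈ M`, both
`ω((αₜ(x)-x)*(αₜ(x)-x)) → 0` and `ω((αₜ(x)-x)(αₜ(x)-x)*) → 0` as `t → 0`. -/
theorem stmt8 {M : Type*} [NormedRing M] [StarRing M] [CStarRing M]
    [NormedAlgebra ℂ M] [CompleteSpace M] [StarModule ℂ M]
    (P : Set (M →L[ℂ] ℂ))
    (hmod : ∀ ω ∈ P, ∀ x : M,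
      (∃ ω' ∈ P, ∀ a : M, ω' a = ω (a * x)) ∧ (∃ ω'' ∈ P, ∀ a : M, ω'' a = ω (x * a)))
    (α : ℝ → M ≃⋆ₐ[ℂ] M)
    (h0 : ∀ x : M, α 0 x = x)
    (hgrp : ∀ t s : ℝ, ∀ x : M, α t (α s x) = α (t + s) x)
    (hcont : ∀ x : M, ∀ ω ∈ P, Continuous fun t : ℝ => ω (α t x)) :
    ∀ ω ∈ P, (∀ a : M, 0 ≤ ω (star a * a)) →
      ∀ x : M,
        Tendsto (fun t : ℝ => ω (star (α t x - x) * (α t x - x))) (𝓝 0) (𝓝 0) ∧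
        Tendsto (fun t : ℝ => ω ((α t x - x) * star (α t x - x))) (𝓝 0) (𝓝 0) := by
  intro ω hω _ x
  constructor
  · obtain ⟨⟨ω', hω', hω'eq⟩, _⟩ := hmod ω hω x
    obtain ⟨_, ⟨ω'', hω'', hω''eq⟩⟩ := hmod ω hω (star x)
    have key : (fun t : ℝ => ω (star (α t x - x) * (α t x - x)))
        = fun t => ω (α t (star x * x)) - ω' (α t (star x)) - ω'' (α t x)
            + ω (star x * x) := by
      funext t
      have h1 : star (α t x) = α t (star x) := (map_star (α t) x).symm
      have h2 : α t (star x) * α t x = α t (star x * x) := (map_mul (α t) _ _).symm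
      rw [star_sub, sub_mul, mul_sub, mul_sub, h1, h2]
      simp only [map_sub]
      rw [hω'eq, hω''eq]
      ring
    rw [key]
    have hc : Continuous (fun t : ℝ => ω (α t (star x * x)) - ω' (α t (star x))
        - ω'' (α t x) + ω (star x * x)) :=
      (((hcont _ ω hω).sub (hcont _ ω' hω')).sub (hcont _ ω'' hω'')).add continuous_const
    have ht := (hc.continuousAt (x := (0 : ℝ))).tendsto
    have hv : ω (α 0 (star x * x)) - ω' (α 0 (star x)) - ω'' (α 0 x) + ω (star x * x)
        = 0 := by
      rw [h0, h0, h0, hω'eq, hω''eq]; ring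
    rwa [hv] at ht
  · obtain ⟨⟨ω', hω', hω'eq⟩, _⟩ := hmod ω hω (star x)
    obtain ⟨_, ⟨ω'', hω'', hω''eq⟩⟩ := hmod ω hω x
    have key : (fun t : ℝ => ω ((α t x - x) * star (α t x - x)))
        = fun t => ω (α t (x * star x)) - ω' (α t x) - ω'' (α t (star x))
            + ω (x * star x) := by
      funext t
      have h1 : star (α t x) = α t (star x) := (map_star (α t) x).symm
      have h2 : α t x * α t (star x) = α t (x * star x) := (map_mul (α t) _ _).symm
      rw [star_sub, sub_mul, mul_sub, mul_sub, h1, h2]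
      simp only [map_sub]
      rw [hω'eq, hω''eq]
      ring
    rw [key]
    have hc : Continuous (fun t : ℝ => ω (α t (x * star x)) - ω' (α t x)
        - ω'' (α t (star x)) + ω (x * star x)) :=
      (((hcont _ ω hω).sub (hcont _ ω' hω')).sub (hcont _ ω'' hω'')).add continuous_const
    have ht := (hc.continuousAt (x := (0 : ℝ))).tendsto
    have hv : ω (α 0 (x * star x)) - ω' (α 0 x) - ω'' (α 0 (star x)) + ω (x * star x)
        = 0 := by
      rw [h0, h0, h0, hω'eq, hω''eq]; ring
    rwa [hv] at ht
end

section
/- Let φ ∈ L¹(ℝ) be the Gaussian φ(s) = (n/√π) exp(−n²s²) for a fixed n > 0, and let f : ℝ → ℂ be a bounded continuous function with φ * f = 0. Then f = 0. -/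
open MeasureTheory Filter Metric
open scoped FourierTransform Real

/-- If the convolution of the Gaussian `φ(s) = (n/√π) exp(-n²s²)` (for some fixed `n > 0`)
with a bounded continuous function `f : ℝ → ℂ` vanishes identically, then `f = 0`. -/
theorem stmt10 (n : ℝ) (hn : 0 < n) (f : ℝ → ℂ)
    (hfc : Continuous f) (hfb : ∃ C : ℝ, ∀ t : ℝ, ‖f t‖ ≤ C)
    (hconv : ∀ t : ℝ,
      ∫ s : ℝ, ((n / Real.sqrt Real.pi * Real.exp (-(n ^ 2) * (t - s) ^ 2) : ℝ) : ℂ) * f s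
        = 0) :
    ∀ t : ℝ, f t = 0 := by
  obtain ⟨C, hC⟩ := hfb
  have hC0 : 0 ≤ C := (norm_nonneg _).trans (hC 0)
  set b : ℂ := ((n ^ 2 : ℝ) : ℂ) with hb
  have hbre : 0 < b.re := by simp only [hb, Complex.ofReal_re]; exact pow_pos hn 2
  -- The key integrability fact
  have key : ∀ c : ℂ, Integrable (fun s : ℝ => f s * Complex.exp (-b * s ^ 2 + c * s)) := by
    intro c
    have h1 := integrable_cexp_quadratic hbre c 0
    have h2 : Integrable (fun s : ℝ => Complex.exp (-b * s ^ 2 + c * s)) := by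
      simpa using h1
    exact h2.bdd_mul hfc.aestronglyMeasurable (ae_of_all _ hC)
  -- The entire function h
  set h : ℂ → ℂ := fun z => ∫ s : ℝ, f s * Complex.exp (-b * s ^ 2 + z * s) with hh
  -- h vanishes on the reals
  have hreal : ∀ x : ℝ, h x = 0 := by
    intro x
    have ht := hconv (x / (2 * n ^ 2))
    set t : ℝ := x / (2 * n ^ 2) with htdef
    set a : ℂ := ((n / Real.sqrt Real.pi : ℝ) : ℂ) * Complex.exp (-b * t ^ 2) with ha
    have hx : (x : ℂ) = 2 * (n : ℂ) ^ 2 * t := by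
      have hn0 : (n : ℂ) ≠ 0 := by exact_mod_cast hn.ne'
      rw [htdef]; push_cast; field_simp
    have hrw : ∀ s : ℝ,
        ((n / Real.sqrt Real.pi * Real.exp (-(n ^ 2) * (t - s) ^ 2) : ℝ) : ℂ) * f s
          = a * (f s * Complex.exp (-b * s ^ 2 + x * s)) := by
      intro s
      rw [ha, hx, hb]
      push_cast [Complex.ofReal_exp]
      rw [show (-(n : ℂ) ^ 2 * ((t : ℂ) - s) ^ 2)
          = (-(n : ℂ) ^ 2 * t ^ 2) + (-(n : ℂ) ^ 2 * s ^ 2 + 2 * (n : ℂ) ^ 2 * t * s) by ring,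
        Complex.exp_add]
      ring
    simp only [hrw] at ht
    rw [MeasureTheory.integral_const_mul] at ht
    have ha0 : a ≠ 0 := by
      rw [ha]
      refine mul_ne_zero ?_ (Complex.exp_ne_zero _)
      simp only [ne_eq, Complex.ofReal_eq_zero]
      positivity
    rcases mul_eq_zero.1 ht with h0 | h0
    · exact absurd h0 ha0
    · exact h0
  -- h is differentiable (entire)
  have hdiff : Differentiable ℂ h := by
    intro z₀
    set k : ℝ := ‖z₀‖ + 2 with hk
    have hk2 : (2:ℝ) ≤ k := by rw [hk]; have := norm_nonneg z₀; linarith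
    have hnormC : ∀ (s : ℝ) (c : ℂ), ‖Complex.exp (-b * (s:ℂ) ^ 2 + c * s)‖
        = Real.exp (-(n ^ 2) * s ^ 2 + c.re * s) := by
      intro s c
      rw [hb, show -((n ^ 2 : ℝ) : ℂ) * (s:ℂ) ^ 2 = ((-(n ^ 2) * s ^ 2 : ℝ) : ℂ) by
        push_cast; ring]
      rw [Complex.norm_exp, Complex.add_re, Complex.ofReal_re,
        Complex.mul_re, Complex.ofReal_re, Complex.ofReal_im]
      simp
    set bound : ℝ → ℝ := fun s => C * (Real.exp (-(n ^ 2) * s ^ 2 + k * s)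
        + Real.exp (-(n ^ 2) * s ^ 2 + -k * s)) with hbd
    have hbdeq : ∀ s : ℝ, bound s = C * (Real.exp (-(n ^ 2) * s ^ 2 + k * s)
        + Real.exp (-(n ^ 2) * s ^ 2 + -k * s)) := fun s => rfl
    have cont1 : ∀ z : ℂ, Continuous fun s : ℝ => Complex.exp (-b * s ^ 2 + z * s) := by
      intro z
      exact Complex.continuous_exp.comp (by continuity)
    have main := hasDerivAt_integral_of_dominated_loc_of_deriv_le (μ := volume)
        (F := fun (z : ℂ) (s : ℝ) => f s * Complex.exp (-b * s ^ 2 + z * s))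
        (F' := fun (z : ℂ) (s : ℝ) => f s * ((s : ℂ) * Complex.exp (-b * s ^ 2 + z * s)))
        (x₀ := z₀) (bound := bound) (ball_mem_nhds z₀ one_pos)
        (Eventually.of_forall fun z => (hfc.mul (cont1 z)).aestronglyMeasurable)
        (key z₀)
        ((hfc.mul (Complex.continuous_ofReal.mul (cont1 z₀))).aestronglyMeasurable)
        ?_ ?_ ?_
    · exact main.2.differentiableAt
    · -- the bound
      refine Eventually.of_forall fun s => fun z hz => ?_
      have hzre : |z.re| + 1 ≤ k := by
        have h1 : |z.re| ≤ ‖z‖ := Complex.abs_re_le_norm z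
        have h2 : ‖z‖ ≤ ‖z₀‖ + 1 := by
          have := mem_ball_iff_norm.1 hz
          have := norm_le_norm_add_norm_sub' z z₀
          linarith
        rw [hk]; linarith
      have key1 : |s| * Real.exp (z.re * s) ≤ Real.exp (k * s) + Real.exp (-k * s) := by
        have e1 : |s| ≤ Real.exp |s| := by
          have := Real.add_one_le_exp |s|
          have := abs_nonneg s
          linarith
        have e2 : z.re * s ≤ |z.re| * |s| := le_trans (le_abs_self _) (by rw [abs_mul])
        have e3 : |s| * Real.exp (z.re * s) ≤ Real.exp ((|z.re| + 1) * |s|) := by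
          calc |s| * Real.exp (z.re * s) ≤ Real.exp |s| * Real.exp (|z.re| * |s|) :=
                mul_le_mul e1 (Real.exp_le_exp.2 e2) (Real.exp_nonneg _) (Real.exp_nonneg _)
            _ = Real.exp ((|z.re| + 1) * |s|) := by rw [← Real.exp_add]; ring_nf
        have e4 : Real.exp ((|z.re| + 1) * |s|) ≤ Real.exp (k * |s|) :=
          Real.exp_le_exp.2 (by nlinarith [abs_nonneg s])
        have e5 : Real.exp (k * |s|) ≤ Real.exp (k * s) + Real.exp (-k * s) := by
          rcases abs_cases s with ⟨hs, _⟩ | ⟨hs, _⟩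
          · rw [hs]
            have := Real.exp_pos (-k * s); linarith
          · rw [hs]
            have := Real.exp_pos (k * s)
            have : Real.exp (k * -s) = Real.exp (-k * s) := by ring_nf
            linarith [Real.exp_pos (k * s), Real.exp_eq_exp.2 (show k * -s = -k * s by ring)]
        linarith
      rw [norm_mul, norm_mul, Complex.norm_real, Real.norm_eq_abs, hnormC s z, hbdeq s]
      have expand : Real.exp (-(n ^ 2) * s ^ 2 + z.re * s)
          = Real.exp (-(n ^ 2) * s ^ 2) * Real.exp (z.re * s) := by
        rw [← Real.exp_add]
      have expand2 : Real.exp (-(n ^ 2) * s ^ 2 + k * s)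
          = Real.exp (-(n ^ 2) * s ^ 2) * Real.exp (k * s) := by
        rw [← Real.exp_add]
      have expand3 : Real.exp (-(n ^ 2) * s ^ 2 + (-k) * s)
          = Real.exp (-(n ^ 2) * s ^ 2) * Real.exp (-k * s) := by
        rw [← Real.exp_add]
      rw [expand, expand2, expand3]
      have hfs := hC s
      have hA := Real.exp_nonneg (-(n ^ 2) * s ^ 2)
      calc ‖f s‖ * (|s| * (Real.exp (-(n ^ 2) * s ^ 2) * Real.exp (z.re * s)))
          ≤ C * (Real.exp (-(n ^ 2) * s ^ 2) * (Real.exp (k * s) + Real.exp (-k * s))) := by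
            have h1 : |s| * (Real.exp (-(n ^ 2) * s ^ 2) * Real.exp (z.re * s))
                ≤ Real.exp (-(n ^ 2) * s ^ 2) * (Real.exp (k * s) + Real.exp (-k * s)) := by
              nlinarith [Real.exp_nonneg (z.re * s), abs_nonneg s,
                mul_le_mul_of_nonneg_left key1 hA]
            nlinarith [norm_nonneg (f s), abs_nonneg s,
              mul_nonneg (abs_nonneg s) (mul_nonneg hA (Real.exp_nonneg (z.re * s)))]
        _ = C * (Real.exp (-(n ^ 2) * s ^ 2) * Real.exp (k * s)
              + Real.exp (-(n ^ 2) * s ^ 2) * Real.exp (-k * s)) := by ring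
    · -- bound integrable
      have i1 : Integrable (fun s : ℝ => Complex.exp (-b * s ^ 2 + (k : ℂ) * s)) := by
        simpa using integrable_cexp_quadratic hbre (k : ℂ) 0
      have i2 : Integrable (fun s : ℝ => Complex.exp (-b * s ^ 2 + ((-k : ℝ) : ℂ) * s)) := by
        simpa using integrable_cexp_quadratic hbre ((-k : ℝ) : ℂ) 0
      refine ((i1.norm.add i2.norm).const_mul C).congr (Eventually.of_forall fun s => ?_)
      simp only [Pi.add_apply]
      rw [hnormC s, hnormC s, hbdeq]
      simp
    · -- differentiability of the integrand
      refine Eventually.of_forall fun s => fun z hz => ?_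
      have d1 : HasDerivAt (fun z : ℂ => -b * (s:ℂ) ^ 2 + z * s) (1 * (s : ℂ)) z :=
        ((hasDerivAt_id z).mul_const (s : ℂ)).const_add (-b * (s:ℂ) ^ 2)
      rw [one_mul] at d1
      have d2 := d1.cexp
      have d3 := d2.const_mul (f s)
      rw [show (s:ℂ) * Complex.exp (-b * s ^ 2 + z * s) = Complex.exp (-b * s ^ 2 + z * s) * s from mul_comm _ _]
      exact d3
  -- h vanishes everywhere by the identity theorem
  have hzero : ∀ z : ℂ, h z = 0 := by
    have han : AnalyticOnNhd ℂ h Set.univ :=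
      hdiff.differentiableOn.analyticOnNhd isOpen_univ
    have hfreq : ∃ᶠ z in nhdsWithin (0 : ℂ) {(0 : ℂ)}ᶜ, h z = 0 := by
      have htend : Tendsto (fun m : ℕ => (((((m : ℝ) + 1)⁻¹ : ℝ)) : ℂ)) atTop
          (nhdsWithin (0 : ℂ) {(0 : ℂ)}ᶜ) := by
        apply tendsto_nhdsWithin_of_tendsto_nhds_of_eventually_within
        · have h0 : Tendsto (fun m : ℕ => (((m : ℝ) + 1)⁻¹ : ℝ)) atTop (nhds 0) := by
            simpa [one_div] using tendsto_one_div_add_atTop_nhds_zero_nat (𝕜 := ℝ)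
          have h1 := (Complex.continuous_ofReal.tendsto 0).comp h0
          rw [Complex.ofReal_zero] at h1
          exact h1
        · refine Eventually.of_forall fun m => ?_
          simp only [Set.mem_compl_iff, Set.mem_singleton_iff, Complex.ofReal_eq_zero]
          positivity
      exact htend.frequently (Frequently.of_forall fun m => hreal _)
    have := han.eqOn_zero_of_preconnected_of_frequently_eq_zero isPreconnected_univ
      (Set.mem_univ 0) hfreq
    exact fun z => this (Set.mem_univ z)
  -- the Fourier transform of g vanishes
  set g : ℝ → ℂ := fun s => f s * Complex.exp (-b * s ^ 2) with hg
  have hgint : Integrable g := by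
    have := key 0
    simpa [hg] using this
  have hgc : Continuous g := hfc.mul (Complex.continuous_exp.comp (by continuity))
  have hFg : 𝓕 g = 0 := by
    funext w
    rw [Real.fourier_real_eq_integral_exp_smul]
    have hrw2 : ∀ s : ℝ, Complex.exp (((-2 : ℝ) * Real.pi * s * w : ℝ) * Complex.I) • g s
        = f s * Complex.exp (-b * s ^ 2 + ((((-2 : ℝ) * Real.pi * w : ℝ) : ℂ) * Complex.I) * s) := by
      intro s
      rw [hg]
      simp only [smul_eq_mul]
      rw [mul_comm, mul_assoc, ← Complex.exp_add]
      congr 2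
      push_cast
      ring
    simp only [hrw2]
    have := hzero ((((-2 : ℝ) * Real.pi * w : ℝ) : ℂ) * Complex.I)
    rw [hh] at this
    simpa using this
  -- Fourier inversion gives g = 0
  have hg0 : ∀ s : ℝ, g s = 0 := by
    have hFgint : Integrable (𝓕 g) := by
      rw [hFg]; exact integrable_zero _ _ _
    have hinv := hgc.fourierInv_fourier_eq hgint hFgint
    intro s
    have h1 : 𝓕⁻ (𝓕 g) s = g s := congrFun hinv s
    rw [hFg] at h1
    rw [← h1, Real.fourierInv_eq]
    simp
  intro t
  have := hg0 t
  rw [hg] at this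
  rcases mul_eq_zero.1 this with h0 | h0
  · exact h0
  · exact absurd h0 (Complex.exp_ne_zero _)
end

section
/- Let (α_t) be a norm-continuous one-parameter isometry group on a Banach space E, fix n > 0, and define R_n(x) = (n/√π) ∫_ℝ exp(−n²t²) α_t(x) dt. Then for each x ∈ E, x lies in the closed linear span of the orbit {α_t(R_n(x)) : t ∈ ℝ}; in other words, any μ ∈ E* vanishing on all α_t(R_n(x)) vanishes on x. -/
open MeasureTheory Complex FourierTransform Real

lemma gauss_mul_int (b : ℝ) (hb : 0 < b) (f : ℝ → ℂ) (hf : Continuous f) (M : ℝ)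
    (hM : ∀ u, ‖f u‖ ≤ M) :
    Integrable (fun u : ℝ => Complex.exp (-(b:ℂ) * (u:ℂ)^2) * f u) := by
  have hM0 : 0 ≤ M := (norm_nonneg _).trans (hM 0)
  apply Integrable.mono (g := fun u : ℝ => M * Real.exp (-b * u^2))
  · exact ((integrable_exp_neg_mul_sq hb).const_mul M)
  · apply Continuous.aestronglyMeasurable
    exact (Complex.continuous_exp.comp (by continuity)).mul hf
  · filter_upwards with u
    have h1 : (-(b:ℂ) * (u:ℂ)^2) = ((-b * u^2 : ℝ) : ℂ) := by push_cast; ring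
    rw [norm_mul, h1, Complex.norm_exp, Complex.ofReal_re]
    rw [Real.norm_eq_abs, _root_.abs_of_nonneg (by positivity : (0:ℝ) ≤ M * Real.exp (-b*u^2))]
    calc Real.exp (-b*u^2) * ‖f u‖ ≤ Real.exp (-b*u^2) * M :=
          mul_le_mul_of_nonneg_left (hM u) (Real.exp_pos _).le
      _ = M * Real.exp (-b*u^2) := mul_comm _ _

lemma norm_gauss_bound (n A B : ℝ) (z : ℂ) (hA : |z.re| ≤ A) (hB : |z.im| ≤ B) (u : ℝ) :
    ‖Complex.exp (-(n^2:ℂ) * (z - (u:ℂ))^2)‖ ≤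
      Real.exp (n^2*(2*A^2+B^2)) * Real.exp (-(n^2/2) * u^2) := by
  rw [Complex.norm_exp, ← Real.exp_add]
  apply Real.exp_le_exp.2
  have hre : (-(n^2:ℂ) * (z - (u:ℂ))^2).re = -(n^2) * ((z.re - u)^2 - z.im^2) := by
    simp only [Complex.mul_re, Complex.neg_re, Complex.neg_im, Complex.ofReal_pow,
      Complex.ofReal_re, Complex.ofReal_im, pow_two, Complex.mul_im, Complex.sub_re,
      Complex.sub_im]
    ring
  rw [hre]
  have h1 : (z.re - u)^2 ≥ u^2/2 - 2*z.re^2 := by nlinarith [sq_nonneg (u - 2*z.re)]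
  have h2 : z.re^2 ≤ A^2 := sq_le_sq' (neg_le_of_abs_le hA) (le_of_abs_le hA)
  have h3 : z.im^2 ≤ B^2 := sq_le_sq' (neg_le_of_abs_le hB) (le_of_abs_le hB)
  nlinarith [sq_nonneg n]

lemma gauss_int_z (n : ℝ) (hn : 0 < n) (f : ℝ → ℂ) (hf : Continuous f) (M : ℝ)
    (hM : ∀ u, ‖f u‖ ≤ M) (z : ℂ) :
    Integrable (fun u : ℝ => Complex.exp (-(n^2:ℂ) * (z - (u:ℂ))^2) * f u) := by
  have hM0 : 0 ≤ M := (norm_nonneg _).trans (hM 0)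
  apply Integrable.mono
    (g := fun u : ℝ => (Real.exp (n^2*(2*|z.re|^2+|z.im|^2)) * M) * Real.exp (-(n^2/2) * u^2))
  · exact ((integrable_exp_neg_mul_sq (by positivity)).const_mul _)
  · apply Continuous.aestronglyMeasurable
    exact (Complex.continuous_exp.comp (by continuity)).mul hf
  · filter_upwards with u
    rw [norm_mul, Real.norm_eq_abs, _root_.abs_of_nonneg (by positivity)]
    calc ‖Complex.exp (-(n^2:ℂ) * (z - (u:ℂ))^2)‖ * ‖f u‖
        ≤ (Real.exp (n^2*(2*|z.re|^2+|z.im|^2)) * Real.exp (-(n^2/2) * u^2)) * M := by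
          apply mul_le_mul (norm_gauss_bound n _ _ z le_rfl le_rfl u) (hM u) (norm_nonneg _)
          positivity
      _ = (Real.exp (n^2*(2*|z.re|^2+|z.im|^2)) * M) * Real.exp (-(n^2/2) * u^2) := by ring

lemma Fdiff (n : ℝ) (hn : 0 < n) (f : ℝ → ℂ) (hf : Continuous f) (M : ℝ)
    (hM : ∀ u, ‖f u‖ ≤ M) :
    Differentiable ℂ (fun z : ℂ => ∫ u : ℝ, Complex.exp (-(n^2:ℂ) * (z - (u:ℂ))^2) * f u) := by
  have hM0 : 0 ≤ M := (norm_nonneg _).trans (hM 0)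
  intro z₀
  set A : ℝ := |z₀.re| + 1 with hA
  set B : ℝ := |z₀.im| + 1 with hB
  set F' : ℂ → ℝ → ℂ := fun (z : ℂ) (u : ℝ) =>
      ((-(n^2:ℂ) * (2 * (z - (u:ℂ)))) * Complex.exp (-(n^2:ℂ) * (z - (u:ℂ))^2)) * f u with hF'
  set bound : ℝ → ℝ := fun u : ℝ => (n^2 * (2*(|u| + A + B))) *
      (Real.exp (n^2*(2*A^2+B^2)) * M) * Real.exp (-(n^2/2) * u^2) with hbd
  have hbound : ∀ᵐ (u : ℝ), ∀ z ∈ Metric.ball z₀ (1:ℝ), ‖F' z u‖ ≤ bound u := by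
    filter_upwards with u z hz
    have hzA : |z.re| ≤ A := by
      have h' := Complex.abs_re_le_norm (z - z₀)
      simp only [Complex.sub_re] at h'
      rw [Metric.mem_ball, Complex.dist_eq] at hz
      have h'' : |z.re - z₀.re| ≤ 1 := h'.trans hz.le
      rw [hA]
      rcases abs_sub_le_iff.1 h'' with ⟨h1, h2⟩
      rcases abs_le.1 (le_refl |z₀.re|) with ⟨h3, h4⟩
      rcases le_abs.2 (Or.inl (le_refl z.re)) with _
      rcases abs_cases z.re with ⟨e1, e2⟩ | ⟨e1, e2⟩ <;>
        rcases abs_cases z₀.re with ⟨g1, g2⟩ | ⟨g1, g2⟩ <;> linarith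
    have hzB : |z.im| ≤ B := by
      have h' := Complex.abs_im_le_norm (z - z₀)
      simp only [Complex.sub_im] at h'
      rw [Metric.mem_ball, Complex.dist_eq] at hz
      have h'' : |z.im - z₀.im| ≤ 1 := h'.trans hz.le
      rw [hB]
      rcases abs_sub_le_iff.1 h'' with ⟨h1, h2⟩
      rcases abs_cases z.im with ⟨e1, e2⟩ | ⟨e1, e2⟩ <;>
        rcases abs_cases z₀.im with ⟨g1, g2⟩ | ⟨g1, g2⟩ <;> linarith
    have hlin : ‖(-(n^2:ℂ) * (2 * (z - (u:ℂ))))‖ ≤ n^2 * (2*(|u| + A + B)) := by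
      rw [norm_mul, norm_mul]
      simp only [norm_neg]
      have h1 : ‖(n:ℂ)^2‖ = n^2 := by
        rw [← Complex.ofReal_pow, Complex.norm_real, Real.norm_eq_abs, _root_.abs_of_nonneg (sq_nonneg n)]
      have h2 : ‖z - (u:ℂ)‖ ≤ |u| + A + B := by
        refine (Complex.norm_le_abs_re_add_abs_im _).trans ?_
        simp only [Complex.sub_re, Complex.sub_im, Complex.ofReal_re, Complex.ofReal_im,
          sub_zero]
        have h3 : |z.re - u| ≤ |z.re| + |u| := abs_sub z.re u
        have := add_le_add h3 hzB
        have := add_le_add_right (add_le_add_right hzA (|u|)) B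
        linarith
      rw [h1, Complex.norm_two]
      refine mul_le_mul_of_nonneg_left ?_ (sq_nonneg n)
      exact mul_le_mul_of_nonneg_left h2 (by norm_num)
    rw [hF', hbd]
    simp only
    rw [norm_mul]
    refine le_trans (mul_le_mul (le_trans (norm_mul_le _ _) (mul_le_mul hlin
      (norm_gauss_bound n A B z hzA hzB u) (norm_nonneg _) (by positivity))) (hM u)
      (norm_nonneg _) (by positivity)) (le_of_eq (by ring))
  have hbint : Integrable bound := by
    have h1 : Integrable (fun u : ℝ => |u| * Real.exp (-(n^2/2) * u^2)) := by
      have h0 := (integrable_mul_exp_neg_mul_sq (b := n^2/2) (by positivity)).abs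
      apply h0.congr
      filter_upwards with u
      rw [abs_mul, _root_.abs_of_nonneg (Real.exp_pos _).le]
    have h2 : Integrable (fun u : ℝ => Real.exp (-(n^2/2) * u^2)) :=
      integrable_exp_neg_mul_sq (by positivity)
    have h3 : Integrable (fun u : ℝ => (n^2 * 2 * (Real.exp (n^2*(2*A^2+B^2)) * M)) *
        (|u| * Real.exp (-(n^2/2) * u^2)) + (n^2 * (2*(A+B)) * (Real.exp (n^2*(2*A^2+B^2)) * M)) *
        Real.exp (-(n^2/2) * u^2)) := (h1.const_mul _).add (h2.const_mul _)
    apply h3.congr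
    filter_upwards with u
    rw [hbd]
    ring
  have hdiff : ∀ᵐ (u : ℝ), ∀ z ∈ Metric.ball z₀ (1:ℝ),
      HasDerivAt (fun z : ℂ => Complex.exp (-(n^2:ℂ) * (z - (u:ℂ))^2) * f u) (F' z u) z := by
    filter_upwards with u z _
    have h0 : HasDerivAt (fun z : ℂ => (z - (u:ℂ))^2) (2 * (z - (u:ℂ))) z := by
      have h00 := ((hasDerivAt_id z).sub_const ((u:ℂ))).pow 2
      exact h00.congr_deriv (by simp)
    have h1 : HasDerivAt (fun z : ℂ => -(n^2:ℂ) * (z - (u:ℂ))^2)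
        (-(n^2:ℂ) * (2 * (z - (u:ℂ)))) z := by
      simpa using h0.const_mul (-(n^2:ℂ))
    rw [hF']
    exact ((h1.cexp).mul_const (f u)).congr_deriv (by ring)
  obtain ⟨-, hd⟩ := hasDerivAt_integral_of_dominated_loc_of_deriv_le (Metric.ball_mem_nhds z₀ one_pos)
    (Filter.Eventually.of_forall fun z =>
      (gauss_int_z n hn f hf M hM z).aestronglyMeasurable)
    (gauss_int_z n hn f hf M hM z₀)
    (Continuous.aestronglyMeasurable (by rw [hF']; continuity))
    hbound hbint hdiff
  exact hd.differentiableAt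

set_option maxHeartbeats 1000000 in
lemma Fzero (n : ℝ) (hn : 0 < n) (f : ℝ → ℂ) (hf : Continuous f) (M : ℝ)
    (hM : ∀ u, ‖f u‖ ≤ M)
    (hK : ∀ t : ℝ, (∫ u : ℝ, Complex.exp (-(n^2:ℂ) * ((t:ℂ) - (u:ℂ))^2) * f u) = 0)
    (z : ℂ) : (∫ u : ℝ, Complex.exp (-(n^2:ℂ) * (z - (u:ℂ))^2) * f u) = 0 := by
  have hFd : Differentiable ℂ
      (fun z : ℂ => ∫ u : ℝ, Complex.exp (-(n^2:ℂ) * (z - (u:ℂ))^2) * f u) :=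
    Fdiff n hn f hf M hM
  have hana : AnalyticOnNhd ℂ
      (fun z : ℂ => ∫ u : ℝ, Complex.exp (-(n^2:ℂ) * (z - (u:ℂ))^2) * f u) Set.univ :=
    hFd.differentiableOn.analyticOnNhd isOpen_univ
  have hfreq : ∃ᶠ w in nhdsWithin (0:ℂ) {(0:ℂ)}ᶜ,
      (∫ u : ℝ, Complex.exp (-(n^2:ℂ) * (w - (u:ℂ))^2) * f u) = 0 := by
    have htend : Filter.Tendsto (fun k : ℕ => (((1:ℝ)/(k+1) : ℝ) : ℂ)) Filter.atTop
        (nhdsWithin (0:ℂ) {(0:ℂ)}ᶜ) := by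
      rw [tendsto_nhdsWithin_iff]
      constructor
      · have h1 : Filter.Tendsto (fun k : ℕ => ((1:ℝ)/(k+1))) Filter.atTop (nhds 0) :=
          tendsto_one_div_add_atTop_nhds_zero_nat
        have h2 := (Complex.continuous_ofReal.tendsto 0).comp h1
        rw [show ((0:ℝ):ℂ) = 0 from rfl] at h2
        exact h2.congr (fun k => by norm_num)
      · filter_upwards with k
        simp only [Set.mem_compl_iff, Set.mem_singleton_iff]
        intro hcontr
        have h3 : ((1:ℝ)/(k+1)) = 0 := by exact_mod_cast hcontr
        have h4 : (0:ℝ) < 1/(k+1) := by positivity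
        linarith
    exact htend.frequently (Filter.Frequently.of_forall fun k => hK _)
  exact hana.eqOn_zero_of_preconnected_of_frequently_eq_zero
    isPreconnected_univ (Set.mem_univ (0:ℂ)) hfreq (Set.mem_univ z)

set_option maxHeartbeats 1000000 in
lemma FTzero (n : ℝ) (hn : 0 < n) (f : ℝ → ℂ) (hf : Continuous f) (M : ℝ)
    (hM : ∀ u, ‖f u‖ ≤ M)
    (hK : ∀ t : ℝ, (∫ u : ℝ, Complex.exp (-(n^2:ℂ) * ((t:ℂ) - (u:ℂ))^2) * f u) = 0)
    (ξ : ℝ) :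
    𝓕 (fun u : ℝ => Complex.exp (-(n^2:ℂ) * (u:ℂ)^2) * f u) ξ = 0 := by
  set y : ℝ := -(Real.pi * ξ)/n^2 with hy
  have hFy := Fzero n hn f hf M hM hK ((y:ℂ) * Complex.I)
  have hsplit : ∀ u : ℝ, Complex.exp (-(n^2:ℂ) * (((y:ℂ) * Complex.I) - (u:ℂ))^2) * f u
      = Complex.exp ((n^2 * y^2 : ℝ):ℂ) *
        (Complex.exp (((-2 * Real.pi * u * ξ : ℝ):ℂ) * Complex.I) *
          (Complex.exp (-(n^2:ℂ) * (u:ℂ)^2) * f u)) := by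
    intro u
    have h2 : ((-2 * Real.pi * u * ξ : ℝ):ℂ) = ((2 * n^2 * y * u : ℝ):ℂ) := by
      have hn' : (n:ℂ) ≠ 0 := by exact_mod_cast hn.ne'
      rw [hy]
      push_cast
      field_simp
    have harg : (-(n^2:ℂ) * (((y:ℂ) * Complex.I) - (u:ℂ))^2)
        = ((n^2 * y^2 : ℝ):ℂ) + ((((-2 * Real.pi * u * ξ : ℝ):ℂ) * Complex.I)
            + (-(n^2:ℂ) * (u:ℂ)^2)) := by
      rw [h2]
      push_cast
      ring_nf
      rw [Complex.I_sq]
      ring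
    rw [harg, Complex.exp_add, Complex.exp_add]
    ring
  have h0 : (∫ u : ℝ, Complex.exp ((n^2 * y^2 : ℝ):ℂ) *
      (Complex.exp (((-2 * Real.pi * u * ξ : ℝ):ℂ) * Complex.I) *
        (Complex.exp (-(n^2:ℂ) * (u:ℂ)^2) * f u))) = 0 := by
    rw [← hFy]
    exact (integral_congr_ae (Filter.Eventually.of_forall fun u => (hsplit u).symm))
  rw [MeasureTheory.integral_const_mul] at h0
  rcases mul_eq_zero.1 h0 with hc | hint
  · exact absurd hc (Complex.exp_ne_zero _)
  · rw [Real.fourier_real_eq_integral_exp_smul]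
    rw [← hint]
    apply integral_congr_ae
    filter_upwards with u
    rw [smul_eq_mul]

set_option maxHeartbeats 1000000 in
lemma keylemma (n : ℝ) (hn : 0 < n) (f : ℝ → ℂ) (hf : Continuous f) (M : ℝ)
    (hM : ∀ u, ‖f u‖ ≤ M)
    (hK : ∀ t : ℝ, (∫ u : ℝ, Complex.exp (-(n^2:ℂ) * ((t:ℂ) - (u:ℂ))^2) * f u) = 0) :
    f 0 = 0 := by
  have hhint : Integrable (fun u : ℝ => Complex.exp (-(n^2:ℂ) * (u:ℂ)^2) * f u) := by
    have := gauss_mul_int (n^2) (by positivity) f hf M hM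
    convert this using 3
    norm_cast
  have hhcont : Continuous (fun u : ℝ => Complex.exp (-(n^2:ℂ) * (u:ℂ)^2) * f u) :=
    (Complex.continuous_exp.comp (by continuity)).mul hf
  have hFT : 𝓕 (fun u : ℝ => Complex.exp (-(n^2:ℂ) * (u:ℂ)^2) * f u) = 0 := by
    funext ξ
    exact FTzero n hn f hf M hM hK ξ
  have hinv := hhcont.fourierInv_fourier_eq hhint (by rw [hFT]; exact integrable_zero _ _ _)
  have hh0 : Complex.exp (-(n^2:ℂ) * ((0:ℝ):ℂ)^2) * f 0 = 0 := by
    conv_lhs => rw [show Complex.exp (-(n^2:ℂ) * ((0:ℝ):ℂ)^2) * f 0 =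
      (fun u : ℝ => Complex.exp (-(n^2:ℂ) * (u:ℂ)^2) * f u) 0 from rfl, ← hinv, hFT]
    simp [Real.fourierInv_eq]
  simpa using hh0

/-- The Gaussian smearing operator `Rₙ` of a one-parameter isometry group. -/
noncomputable def smear11 {E : Type*} [NormedAddCommGroup E] [NormedSpace ℂ E]
    [CompleteSpace E] (α : ℝ → E →L[ℂ] E) (n : ℝ) (v : E) : E :=
  ∫ t : ℝ, (n / Real.sqrt Real.pi * Real.exp (-(n ^ 2) * t ^ 2)) • α t v

set_option maxHeartbeats 1000000 in
/-- For a norm-continuous one-parameter isometry group `(αₜ)` and `n > 0`, every `x` lies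
in the closed linear span of the orbit `{αₜ(Rₙ(x)) : t ∈ ℝ}`: any functional vanishing on
all `αₜ(Rₙ(x))` vanishes on `x`. -/
theorem stmt11 {E : Type*} [NormedAddCommGroup E] [NormedSpace ℂ E] [CompleteSpace E]
    (α : ℝ → E →L[ℂ] E)
    (hiso : ∀ t : ℝ, ∀ x : E, ‖α t x‖ = ‖x‖)
    (h0 : ∀ x : E, α 0 x = x)
    (hgrp : ∀ t s : ℝ, ∀ x : E, α t (α s x) = α (t + s) x)
    (hcont : ∀ x : E, Continuous fun t : ℝ => α t x)
    (n : ℝ) (hn : 0 < n) (x : E)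
    (μ : E →L[ℂ] ℂ)
    (hμ : ∀ t : ℝ, μ (α t (smear11 α n x)) = 0) :
    μ x = 0 := by
  set w : ℝ → ℝ := fun s => n / Real.sqrt Real.pi * Real.exp (-(n ^ 2) * s ^ 2) with hw
  have hwc : Continuous w := by
    apply Continuous.mul continuous_const
    exact Real.continuous_exp.comp (by continuity)
  have hwnn : ∀ s, 0 ≤ w s := by
    intro s
    apply mul_nonneg _ (Real.exp_pos _).le
    positivity
  -- integrability of gaussian-weighted orbits
  have hIg : ∀ (h : ℝ → E), Continuous h → (∀ s, ‖h s‖ = ‖x‖) →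
      Integrable (fun s => w s • h s) := by
    intro h hc hb
    apply Integrable.mono (g := fun s : ℝ => (n / Real.sqrt Real.pi * ‖x‖) *
      Real.exp (-(n ^ 2) * s ^ 2))
    · exact (integrable_exp_neg_mul_sq (by positivity)).const_mul _
    · exact (hwc.smul hc).aestronglyMeasurable
    · filter_upwards with s
      rw [norm_smul, Real.norm_eq_abs, _root_.abs_of_nonneg (hwnn s), hb s,
        Real.norm_eq_abs, _root_.abs_of_nonneg (by positivity)]
      rw [hw]
      simp only
      exact le_of_eq (by ring)
  set f : ℝ → ℂ := fun t => μ (α t x) with hfdef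
  have hf : Continuous f := μ.continuous.comp (hcont x)
  have hM : ∀ u, ‖f u‖ ≤ ‖μ‖ * ‖x‖ := by
    intro u
    calc ‖μ (α u x)‖ ≤ ‖μ‖ * ‖α u x‖ := μ.le_opNorm _
      _ = ‖μ‖ * ‖x‖ := by rw [hiso]
  have hK : ∀ t : ℝ, (∫ u : ℝ, Complex.exp (-(n^2:ℂ) * ((t:ℂ) - (u:ℂ))^2) * f u) = 0 := by
    intro t
    have hint1 : Integrable (fun s => w s • α s x) := hIg _ (hcont x) (fun s => hiso s x)
    have e1 : α t (smear11 α n x) = ∫ s, w s • α (t + s) x := by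
      rw [smear11, ← ContinuousLinearMap.integral_comp_comm _ hint1]
      apply integral_congr_ae
      filter_upwards with s
      show α t (w s • α s x) = w s • α (t + s) x
      rw [(α t).map_smul_of_tower, hgrp]
    have hc2 : Continuous (fun s : ℝ => α (t + s) x) :=
      (hcont x).comp (continuous_const.add continuous_id)
    have hint2 : Integrable (fun s => w s • α (t + s) x) := hIg _ hc2 (fun s => hiso _ x)
    have e2 : μ (α t (smear11 α n x)) = ∫ s, w s • f (t + s) := by
      rw [e1, ← ContinuousLinearMap.integral_comp_comm _ hint2]
      apply integral_congr_ae
      filter_upwards with s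
      show μ (w s • α (t + s) x) = w s • f (t + s)
      rw [μ.map_smul_of_tower]
    have e3 : (∫ s, w s • f (t + s)) = ∫ u, w (u - t) • f u := by
      have h4 := MeasureTheory.integral_add_right_eq_self
        (μ := (volume : Measure ℝ)) (fun u => w (u - t) • f u) t
      rw [← h4]
      apply integral_congr_ae
      filter_upwards with s
      simp only [add_sub_cancel_right]
      rw [add_comm t s]
    have e4 : (∫ u, w (u - t) • f u) = ((n / Real.sqrt Real.pi : ℝ) : ℂ) *
        ∫ u : ℝ, Complex.exp (-(n^2:ℂ) * ((t:ℂ) - (u:ℂ))^2) * f u := by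
      rw [← MeasureTheory.integral_const_mul]
      apply integral_congr_ae
      filter_upwards with u
      rw [hw]
      simp only
      rw [Complex.real_smul]
      have harg : ((-(n ^ 2) * (u - t) ^ 2 : ℝ) : ℂ) = -(n^2:ℂ) * ((t:ℂ) - (u:ℂ))^2 := by
        push_cast
        ring
      rw [Complex.ofReal_mul, Complex.ofReal_exp, harg, mul_assoc]
    have hc0 : ((n / Real.sqrt Real.pi : ℝ) : ℂ) ≠ 0 := by
      have : (0:ℝ) < n / Real.sqrt Real.pi := by
        apply div_pos hn
        exact Real.sqrt_pos.2 Real.pi_pos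
      exact_mod_cast this.ne'
    have := hμ t
    rw [e2, e3, e4] at this
    exact (mul_eq_zero.1 this).resolve_left hc0
  have hf0 := keylemma n hn f hf (‖μ‖ * ‖x‖) hM hK
  rw [hfdef] at hf0
  simp only at hf0
  rw [h0] at hf0
  exact hf0
end

section
/- Let E be a Banach space, F ⊆ E a closed subspace, and (α_t) a norm-continuous one-parameter isometry group on E with α_t(F) ⊆ F for all t. Suppose there exists a norm-one linear projection e : E* → F⊥. Then there exists a norm-one projection p : E* → F⊥ satisfying p ∘ α_t* = α_t* ∘ p for all t ∈ ℝ. -/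
namespace Stmt18Aux
open Pointwise

/-- bounded real-valued functions on ℝ -/
def Bdd : Submodule ℝ (ℝ → ℝ) where
  carrier := {f | ∃ C, ∀ x, |f x| ≤ C}
  add_mem' := by
    rintro f g ⟨C, hC⟩ ⟨D, hD⟩
    exact ⟨C + D, fun x => (abs_add_le _ _).trans (add_le_add (hC x) (hD x))⟩
  zero_mem' := ⟨0, fun x => by simp⟩
  smul_mem' := by
    rintro c f ⟨C, hC⟩
    exact ⟨|c| * C, fun x => by
      simp only [Pi.smul_apply, smul_eq_mul, abs_mul]
      exact mul_le_mul_of_nonneg_left (hC x) (abs_nonneg c)⟩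

noncomputable def avg (n : ℕ) (c : Fin n → ℝ) (f : ℝ → ℝ) : ℝ :=
  sSup (Set.range fun x : ℝ => (∑ i, f (x + c i)) / n)

def meanSet (f : ℝ → ℝ) : Set ℝ := {r | ∃ n, 0 < n ∧ ∃ c : Fin n → ℝ, r = avg n c f}

noncomputable def subl (f : ℝ → ℝ) : ℝ := sInf (meanSet f)

lemma avg_bddAbove {f : ℝ → ℝ} {C : ℝ} (hf : ∀ x, f x ≤ C) {n : ℕ} (hn : 0 < n)
    (c : Fin n → ℝ) :
    BddAbove (Set.range fun x : ℝ => (∑ i, f (x + c i)) / n) := by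
  have hn' : (0:ℝ) < n := by exact_mod_cast hn
  refine ⟨C, ?_⟩
  rintro r ⟨x, rfl⟩
  rw [div_le_iff₀ hn']
  calc (∑ i, f (x + c i)) ≤ ∑ _i : Fin n, C := Finset.sum_le_sum fun i _ => hf _
  _ = C * n := by simp [mul_comm]

lemma le_avg {f : ℝ → ℝ} {C : ℝ} (hf : ∀ x, f x ≤ C) {n : ℕ} (hn : 0 < n)
    (c : Fin n → ℝ) (x : ℝ) :
    (∑ i, f (x + c i)) / n ≤ avg n c f :=
  le_csSup (avg_bddAbove hf hn c) ⟨x, rfl⟩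

lemma avg_le {f : ℝ → ℝ} {C : ℝ} {n : ℕ} {c : Fin n → ℝ}
    (h : ∀ x, (∑ i, f (x + c i)) / n ≤ C) :
    avg n c f ≤ C := csSup_le (Set.range_nonempty _) (by rintro r ⟨x, rfl⟩; exact h x)

lemma meanSet_nonempty (f : ℝ → ℝ) : (meanSet f).Nonempty :=
  ⟨avg 1 0 f, 1, one_pos, 0, rfl⟩

lemma meanSet_bddBelow {f : ℝ → ℝ} (hf : f ∈ Bdd) : BddBelow (meanSet f) := by
  obtain ⟨C, hC⟩ := hf
  refine ⟨-C, ?_⟩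
  rintro r ⟨n, hn, c, rfl⟩
  have hn' : (0:ℝ) < n := by exact_mod_cast hn
  calc (-C) ≤ (∑ i, f (0 + c i)) / n := by
        rw [le_div_iff₀ hn']
        calc (-C) * n = ∑ _i : Fin n, -C := by simp [mul_comm]
        _ ≤ _ := Finset.sum_le_sum fun i _ => neg_le_of_abs_le (hC _)
  _ ≤ avg n c f := le_avg (fun x => (abs_le.mp (hC x)).2) hn c 0

lemma subl_le_avg {f : ℝ → ℝ} (hf : f ∈ Bdd) {n : ℕ} (hn : 0 < n) (c : Fin n → ℝ) :
    subl f ≤ avg n c f := csInf_le (meanSet_bddBelow hf) ⟨n, hn, c, rfl⟩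

lemma subl_le_of_le {f : ℝ → ℝ} (hf : f ∈ Bdd) {C : ℝ} (h : ∀ x, f x ≤ C) :
    subl f ≤ C := by
  refine (subl_le_avg hf one_pos 0).trans (avg_le fun x => ?_)
  simpa using h x

lemma subl_zero : subl (0 : ℝ → ℝ) = 0 := by
  have h1 : subl (0 : ℝ → ℝ) ≤ 0 := subl_le_of_le (zero_mem _) fun x => le_refl 0
  refine le_antisymm h1 (le_csInf (meanSet_nonempty _) ?_)
  rintro r ⟨n, hn, c, rfl⟩
  have : (Set.range fun x : ℝ => (∑ i, (0:ℝ → ℝ) (x + c i)) / n) = {0} := by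
    ext y; simp
  unfold avg
  rw [this, csSup_singleton]

lemma avg_smul {n : ℕ} (hn : 0 < n) (c : Fin n → ℝ) (f : ℝ → ℝ) {t : ℝ} (ht : 0 < t) :
    avg n c (t • f) = t * avg n c f := by
  unfold avg
  have h1 : (fun x : ℝ => (∑ i, (t • f) (x + c i)) / n)
      = fun x : ℝ => t • ((∑ i, f (x + c i)) / n) := by
    funext x
    simp only [Pi.smul_apply, smul_eq_mul, ← Finset.mul_sum, mul_div_assoc]
  rw [h1, ← Set.smul_set_range, Real.sSup_smul_of_nonneg (le_of_lt ht)]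
  rfl

lemma subl_smul (f : ℝ → ℝ) {t : ℝ} (ht : 0 < t) : subl (t • f) = t * subl f := by
  have h1 : meanSet (t • f) = t • meanSet f := by
    ext r
    constructor
    · rintro ⟨n, hn, c, rfl⟩
      exact ⟨avg n c f, ⟨n, hn, c, rfl⟩, (avg_smul hn c f ht).symm⟩
    · rintro ⟨a, ⟨n, hn, c, rfl⟩, rfl⟩
      exact ⟨n, hn, c, (avg_smul hn c f ht).symm⟩
  unfold subl
  rw [h1, Real.sInf_smul_of_nonneg (le_of_lt ht)]
  rfl

lemma subl_pair {f g : ℝ → ℝ} (hf : f ∈ Bdd) (hg : g ∈ Bdd)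
    {n m : ℕ} (hn : 0 < n) (hm : 0 < m) (c : Fin n → ℝ) (d : Fin m → ℝ) :
    subl (f + g) ≤ avg n c f + avg m d g := by
  obtain ⟨C, hC⟩ := hf
  obtain ⟨D, hD⟩ := hg
  have hfC : ∀ x, f x ≤ C := fun x => (abs_le.mp (hC x)).2
  have hgD : ∀ x, g x ≤ D := fun x => (abs_le.mp (hD x)).2
  set cc : Fin (m * n) → ℝ :=
    fun k => c (finProdFinEquiv.symm k).2 + d (finProdFinEquiv.symm k).1 with hcc
  have hN : 0 < m * n := Nat.mul_pos hm hn
  have hN' : (0:ℝ) < (m*n : ℕ) := by exact_mod_cast hN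
  have hn' : (0:ℝ) < n := by exact_mod_cast hn
  have hm' : (0:ℝ) < m := by exact_mod_cast hm
  refine (subl_le_avg (add_mem ⟨C, hC⟩ ⟨D, hD⟩) hN cc).trans (avg_le fun x => ?_)
  rw [div_le_iff₀ hN']
  have hsum : ∀ h : ℝ → ℝ, (∑ k, h (x + cc k))
      = ∑ p : Fin m × Fin n, h (x + (c p.2 + d p.1)) := by
    intro h
    rw [← Equiv.sum_comp finProdFinEquiv (fun k => h (x + cc k))]
    refine Finset.sum_congr rfl fun p _ => ?_
    simp only [hcc, Equiv.symm_apply_apply]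
  have hf' : (∑ k, f (x + cc k)) ≤ (m*n : ℕ) * avg n c f := by
    rw [hsum f]
    rw [Fintype.sum_prod_type]
    have : ∀ j : Fin m, (∑ i : Fin n, f (x + (c i + d j))) ≤ n * avg n c f := by
      intro j
      have h2 := le_avg hfC hn c (x + d j)
      rw [div_le_iff₀ hn'] at h2
      calc (∑ i : Fin n, f (x + (c i + d j))) = ∑ i : Fin n, f ((x + d j) + c i) := by
            refine Finset.sum_congr rfl fun i _ => by ring_nf
      _ ≤ avg n c f * n := h2
      _ = n * avg n c f := by ring
    calc (∑ j : Fin m, ∑ i : Fin n, f (x + (c i + d j)))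
        ≤ ∑ _j : Fin m, ((n:ℝ) * avg n c f) := Finset.sum_le_sum fun j _ => this j
    _ = (m*n : ℕ) * avg n c f := by push_cast; ring_nf; simp [Finset.sum_const]; ring
  have hg' : (∑ k, g (x + cc k)) ≤ (m*n : ℕ) * avg m d g := by
    rw [hsum g]
    rw [Fintype.sum_prod_type]
    have : ∀ j : Fin m, True := fun _ => trivial
    have key : ∀ i : Fin n, True := fun _ => trivial
    have h3 : (∑ j : Fin m, ∑ i : Fin n, g (x + (c i + d j)))
        = ∑ i : Fin n, ∑ j : Fin m, g ((x + c i) + d j) := by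
      rw [Finset.sum_comm]
      exact Finset.sum_congr rfl fun i _ => Finset.sum_congr rfl fun j _ => by ring_nf
    rw [h3]
    have : ∀ i : Fin n, (∑ j : Fin m, g ((x + c i) + d j)) ≤ m * avg m d g := by
      intro i
      have h2 := le_avg hgD hm d (x + c i)
      rw [div_le_iff₀ hm'] at h2
      calc (∑ j : Fin m, g ((x + c i) + d j)) ≤ avg m d g * m := h2
      _ = m * avg m d g := by ring
    calc (∑ i : Fin n, ∑ j : Fin m, g ((x + c i) + d j))
        ≤ ∑ _i : Fin n, ((m:ℝ) * avg m d g) := Finset.sum_le_sum fun i _ => this i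
    _ = (m*n : ℕ) * avg m d g := by push_cast; simp [Finset.sum_const]; ring
  have hsplit : (∑ k, (f + g) (x + cc k)) = (∑ k, f (x + cc k)) + (∑ k, g (x + cc k)) := by
    simp [Finset.sum_add_distrib]
  rw [hsplit]
  nlinarith [hf', hg']

lemma subl_add {f g : ℝ → ℝ} (hf : f ∈ Bdd) (hg : g ∈ Bdd) :
    subl (f + g) ≤ subl f + subl g := by
  have key : ∀ a ∈ meanSet f, ∀ b ∈ meanSet g, subl (f + g) ≤ a + b := by
    rintro a ⟨n, hn, c, rfl⟩ b ⟨m, hm, d, rfl⟩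
    exact subl_pair hf hg hn hm c d
  have step1 : ∀ a ∈ meanSet f, subl (f + g) - a ≤ subl g := by
    intro a ha
    refine le_csInf (meanSet_nonempty _) fun b hb => ?_
    linarith [key a ha b hb]
  have step2 : subl (f + g) - subl g ≤ subl f := by
    refine le_csInf (meanSet_nonempty _) fun a ha => ?_
    linarith [step1 a ha]
  linarith

lemma subl_shift {f : ℝ → ℝ} (hf : f ∈ Bdd) (s : ℝ) :
    subl (fun x => f x - f (x + s)) ≤ 0 := by
  obtain ⟨C, hC⟩ := hf
  have hC0 : 0 ≤ C := le_trans (abs_nonneg _) (hC 0)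
  have hgB : (fun x => f x - f (x + s)) ∈ Bdd := by
    refine ⟨2*C, fun x => ?_⟩
    have := hC x; have := hC (x + s)
    calc |f x - f (x + s)| ≤ |f x| + |f (x + s)| := abs_sub _ _
    _ ≤ 2*C := by linarith
  refine le_of_forall_pos_le_add fun ε hε => ?_
  obtain ⟨n, hn⟩ := exists_nat_gt (2*C/ε)
  have hn0 : 0 < n := by
    rcases Nat.eq_zero_or_pos n with h | h
    · subst h
      norm_num at hn
      nlinarith [div_nonneg (by linarith : (0:ℝ) ≤ 2*C) (le_of_lt hε)]
    · exact h
  have hn' : (0:ℝ) < n := by exact_mod_cast hn0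
  set c : Fin n → ℝ := fun i => (i : ℕ) * s with hc
  have h1 : avg n c (fun x => f x - f (x + s)) ≤ 2*C/n := by
    refine avg_le fun x => ?_
    have htel : (∑ i : Fin n, (f (x + c i) - f ((x + c i) + s)))
        = f x - f (x + n * s) := by
      have h1 : (∑ i : Fin n, (f (x + c i) - f ((x + c i) + s)))
          = ∑ i ∈ Finset.range n,
              ((fun k : ℕ => f (x + k * s)) i - (fun k : ℕ => f (x + k * s)) (i+1)) := by
        rw [← Fin.sum_univ_eq_sum_range
          (fun i : ℕ => (fun k : ℕ => f (x + k * s)) i - (fun k : ℕ => f (x + k * s)) (i+1)) n]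
        refine Finset.sum_congr rfl fun i _ => ?_
        simp only [hc]
        have h2 : x + (i:ℕ) * s + s = x + (((i:ℕ)+1 : ℕ) : ℝ) * s := by push_cast; ring
        rw [h2]
      rw [h1, Finset.sum_range_sub' (fun k : ℕ => f (x + k * s)) n]
      simp
    show (∑ i, (f (x + c i) - f ((x + c i) + s))) / n ≤ 2*C/n
    rw [htel, div_le_div_iff_of_pos_right hn']
    have h1 := abs_le.mp (hC x)
    have h2 := abs_le.mp (hC (x + n*s))
    linarith [h1.1, h1.2, h2.1, h2.2]
  refine ((subl_le_avg hgB hn0 c).trans h1).trans ?_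
  have h2 : 2*C/(n:ℝ) < ε := by
    rw [div_lt_iff₀ hn']
    nlinarith [(div_lt_iff₀ hε).mp hn]
  linarith

theorem exists_mean : ∃ Λ : Bdd →ₗ[ℝ] ℝ, ∀ f : Bdd, Λ f ≤ subl ↑f := by
  obtain ⟨g, -, hg⟩ := exists_extension_of_le_sublinear ⟨⊥, 0⟩ (fun f : Bdd => subl ↑f)
    (fun t ht f => by
      show subl ((t • f : Bdd) : ℝ → ℝ) = t * subl (f : ℝ → ℝ)
      have h : ((t • f : Bdd) : ℝ → ℝ) = t • (f : ℝ → ℝ) := rfl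
      rw [h, subl_smul _ ht])
    (fun f g => by
      show subl ((f + g : Bdd) : ℝ → ℝ) ≤ subl (f : ℝ → ℝ) + subl (g : ℝ → ℝ)
      have h : ((f + g : Bdd) : ℝ → ℝ) = (f : ℝ → ℝ) + (g : ℝ → ℝ) := rfl
      rw [h]; exact subl_add f.2 g.2)
    (fun x => by
      show (0:ℝ) ≤ subl ((x : Bdd) : ℝ → ℝ)
      have hx : ((x : Bdd) : ℝ → ℝ) = (0 : ℝ → ℝ) := by
        have h := Submodule.mem_bot (R := ℝ) |>.mp x.2
        rw [h]; rfl
      rw [hx, subl_zero])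
  exact ⟨g, hg⟩


lemma bdd_def (f : ℝ → ℝ) : f ∈ Bdd ↔ ∃ C, ∀ x, |f x| ≤ C := Iff.rfl

section Lam
variable (Λ : Bdd →ₗ[ℝ] ℝ)

open scoped Classical in
noncomputable def LamR (f : ℝ → ℝ) : ℝ := if h : f ∈ Bdd then Λ ⟨f, h⟩ else 0

variable {Λ}
variable (hΛ : ∀ f : Bdd, Λ f ≤ subl ↑f)

lemma LamR_eq {f : ℝ → ℝ} (hf : f ∈ Bdd) : LamR Λ f = Λ ⟨f, hf⟩ := dif_pos hf

include hΛ in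
lemma LamR_le {f : ℝ → ℝ} (hf : f ∈ Bdd) {C : ℝ} (h : ∀ x, f x ≤ C) : LamR Λ f ≤ C := by
  rw [LamR_eq hf]
  exact (hΛ ⟨f, hf⟩).trans (subl_le_of_le hf h)

lemma LamR_add {f g : ℝ → ℝ} (hf : f ∈ Bdd) (hg : g ∈ Bdd) :
    LamR Λ (fun x => f x + g x) = LamR Λ f + LamR Λ g := by
  have hfg : (fun x => f x + g x) ∈ Bdd := add_mem hf hg
  rw [LamR_eq hfg, LamR_eq hf, LamR_eq hg]
  have : (⟨fun x => f x + g x, hfg⟩ : Bdd) = ⟨f, hf⟩ + ⟨g, hg⟩ := rfl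
  rw [this, map_add]

lemma LamR_smul {f : ℝ → ℝ} (hf : f ∈ Bdd) (c : ℝ) :
    LamR Λ (fun x => c * f x) = c * LamR Λ f := by
  have hcf : (fun x => c * f x) ∈ Bdd := Submodule.smul_mem _ c hf
  rw [LamR_eq hcf, LamR_eq hf]
  have : (⟨fun x => c * f x, hcf⟩ : Bdd) = c • ⟨f, hf⟩ := rfl
  rw [this, map_smul, smul_eq_mul]

lemma LamR_sub {f g : ℝ → ℝ} (hf : f ∈ Bdd) (hg : g ∈ Bdd) :
    LamR Λ (fun x => f x - g x) = LamR Λ f - LamR Λ g := by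
  have h1 : (fun x => -1 * g x) ∈ Bdd := Submodule.smul_mem _ (-1) hg
  have : (fun x => f x - g x) = fun x => f x + (-1) * g x := by funext x; ring
  rw [this, LamR_add hf h1, LamR_smul hg (-1)]
  ring

include hΛ in
lemma LamR_const (c : ℝ) : LamR Λ (fun _ => c) = c := by
  have hc : (fun _ : ℝ => c) ∈ Bdd := (bdd_def _).mpr ⟨|c|, fun x => le_refl _⟩
  have h1 : LamR Λ (fun _ => c) ≤ c := LamR_le hΛ hc fun x => le_refl c
  have h2 : LamR Λ (fun x : ℝ => -1 * (fun _ : ℝ => c) x) ≤ -c := by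
    refine LamR_le hΛ (Submodule.smul_mem _ (-1) hc) fun x => by norm_num
  rw [LamR_smul hc (-1)] at h2
  linarith

include hΛ in
lemma LamR_shift {f : ℝ → ℝ} (hf : f ∈ Bdd) (s : ℝ) :
    LamR Λ (fun x => f (x + s)) = LamR Λ f := by
  have hfs : (fun x => f (x + s)) ∈ Bdd := by
    obtain ⟨C, hC⟩ := (bdd_def f).mp hf
    exact (bdd_def _).mpr ⟨C, fun x => hC (x + s)⟩
  have h1 : LamR Λ (fun x => f x - f (x + s)) ≤ 0 := by
    have hm1 : (fun x => f x - f (x + s)) ∈ Bdd := sub_mem hf hfs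
    rw [LamR_eq hm1]
    exact (hΛ _).trans (subl_shift hf s)
  have h2 : LamR Λ (fun x => f (x + s) - f x) ≤ 0 := by
    have key : (fun x => f (x + s) - f x)
        = fun x => (fun y => f (y + s)) x - (fun y => f (y + s)) (x + (-s)) := by
      funext x
      have : x + (-s) + s = x := by ring
      simp only [this]
    have hm2 : (fun x => (fun y => f (y + s)) x - (fun y => f (y + s)) (x + (-s))) ∈ Bdd := by
      refine sub_mem hfs ?_
      obtain ⟨C, hC⟩ := (bdd_def _).mp hfs
      exact (bdd_def _).mpr ⟨C, fun x => hC (x + (-s))⟩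
    rw [key, LamR_eq hm2]
    exact (hΛ _).trans (subl_shift hfs (-s))
  rw [LamR_sub hf hfs] at h1
  rw [LamR_sub hfs hf] at h2
  linarith

variable (Λ) in
noncomputable def LamC (f : ℝ → ℂ) : ℂ :=
  ⟨LamR Λ (fun t => (f t).re), LamR Λ (fun t => (f t).im)⟩

lemma re_mem_bdd {f : ℝ → ℂ} {C : ℝ} (hf : ∀ t, ‖f t‖ ≤ C) :
    (fun t => (f t).re) ∈ Bdd :=
  (bdd_def _).mpr ⟨C, fun t => (Complex.abs_re_le_norm (f t)).trans (hf t)⟩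

lemma im_mem_bdd {f : ℝ → ℂ} {C : ℝ} (hf : ∀ t, ‖f t‖ ≤ C) :
    (fun t => (f t).im) ∈ Bdd :=
  (bdd_def _).mpr ⟨C, fun t => (Complex.abs_im_le_norm (f t)).trans (hf t)⟩

lemma LamC_re (f : ℝ → ℂ) : (LamC Λ f).re = LamR Λ (fun t => (f t).re) := rfl
lemma LamC_im (f : ℝ → ℂ) : (LamC Λ f).im = LamR Λ (fun t => (f t).im) := rfl

lemma LamC_add {f g : ℝ → ℂ} {C D : ℝ} (hf : ∀ t, ‖f t‖ ≤ C) (hg : ∀ t, ‖g t‖ ≤ D) :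
    LamC Λ (fun t => f t + g t) = LamC Λ f + LamC Λ g := by
  apply Complex.ext
  · show LamR Λ (fun t => (f t + g t).re) = _
    have h : (fun t => (f t + g t).re) = fun t => (f t).re + (g t).re := by
      funext t; simp
    rw [h, LamR_add (re_mem_bdd hf) (re_mem_bdd hg)]
    rfl
  · show LamR Λ (fun t => (f t + g t).im) = _
    have h : (fun t => (f t + g t).im) = fun t => (f t).im + (g t).im := by
      funext t; simp
    rw [h, LamR_add (im_mem_bdd hf) (im_mem_bdd hg)]
    rfl

lemma LamC_smul {f : ℝ → ℂ} {C : ℝ} (hf : ∀ t, ‖f t‖ ≤ C) (c : ℂ) :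
    LamC Λ (fun t => c * f t) = c * LamC Λ f := by
  have hre := re_mem_bdd hf
  have him := im_mem_bdd hf
  apply Complex.ext
  · show LamR Λ (fun t => (c * f t).re) = (c * LamC Λ f).re
    have h : (fun t => (c * f t).re)
        = fun t => c.re * (f t).re - c.im * (f t).im := by
      funext t; simp [Complex.mul_re]
    rw [h]
    have hm1 : (fun s => c.re * (f s).re) ∈ Bdd := Submodule.smul_mem _ c.re hre
    have hm2 : (fun s => c.im * (f s).im) ∈ Bdd := Submodule.smul_mem _ c.im him
    have h2 : (fun t => c.re * (f t).re - c.im * (f t).im)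
        = fun t => (fun s => c.re * (f s).re) t - (fun s => c.im * (f s).im) t := rfl
    rw [h2, LamR_sub hm1 hm2, LamR_smul hre, LamR_smul him]
    simp [Complex.mul_re, LamC_re, LamC_im]
  · show LamR Λ (fun t => (c * f t).im) = (c * LamC Λ f).im
    have h : (fun t => (c * f t).im)
        = fun t => (fun s => c.re * (f s).im) t + (fun s => c.im * (f s).re) t := by
      funext t; simp [Complex.mul_im]
    have hm1 : (fun s => c.re * (f s).im) ∈ Bdd := Submodule.smul_mem _ c.re him
    have hm2 : (fun s => c.im * (f s).re) ∈ Bdd := Submodule.smul_mem _ c.im hre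
    rw [h, LamR_add hm1 hm2, LamR_smul him, LamR_smul hre]
    simp [Complex.mul_im, LamC_re, LamC_im]

include hΛ in
lemma LamC_const (z : ℂ) : LamC Λ (fun _ => z) = z := by
  apply Complex.ext
  · show LamR Λ (fun _ => z.re) = z.re
    exact LamR_const hΛ z.re
  · show LamR Λ (fun _ => z.im) = z.im
    exact LamR_const hΛ z.im

include hΛ in
lemma LamC_shift {f : ℝ → ℂ} {C : ℝ} (hf : ∀ t, ‖f t‖ ≤ C) (s : ℝ) :
    LamC Λ (fun t => f (t + s)) = LamC Λ f := by
  apply Complex.ext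
  · exact LamR_shift hΛ (re_mem_bdd hf) s
  · exact LamR_shift hΛ (im_mem_bdd hf) s

include hΛ in
lemma LamC_norm_le {f : ℝ → ℂ} {C : ℝ} (hf : ∀ t, ‖f t‖ ≤ C) :
    ‖LamC Λ f‖ ≤ C := by
  have hC0 : 0 ≤ C := le_trans (norm_nonneg _) (hf 0)
  set z := LamC Λ f with hz
  have key : ‖z‖ ^ 2 ≤ ‖z‖ * C := by
    have h1 : LamC Λ (fun t => (starRingEnd ℂ) z * f t) = (starRingEnd ℂ) z * z := by
      rw [LamC_smul hf]
    have h2 : ((starRingEnd ℂ) z * z).re = ‖z‖ ^ 2 := by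
      rw [mul_comm, Complex.mul_conj]
      rw [Complex.ofReal_re]
      rw [Complex.normSq_eq_norm_sq]
    have h3 : (LamC Λ (fun t => (starRingEnd ℂ) z * f t)).re
        = LamR Λ (fun t => ((starRingEnd ℂ) z * f t).re) := rfl
    have h4 : LamR Λ (fun t => ((starRingEnd ℂ) z * f t).re) ≤ ‖z‖ * C := by
      refine LamR_le hΛ (re_mem_bdd (C := ‖z‖ * C) fun t => ?_) fun t => ?_
      · rw [norm_mul, RCLike.norm_conj]
        exact mul_le_mul_of_nonneg_left (hf t) (norm_nonneg z)
      · calc ((starRingEnd ℂ) z * f t).re ≤ ‖(starRingEnd ℂ) z * f t‖ := Complex.re_le_norm _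
        _ ≤ ‖z‖ * C := by
            rw [norm_mul, RCLike.norm_conj]
            exact mul_le_mul_of_nonneg_left (hf t) (norm_nonneg z)
    rw [← h2, ← h1]
    exact h4.trans_eq' rfl
  nlinarith [norm_nonneg z]

end Lam

end Stmt18Aux
set_option maxHeartbeats 1000000 in
open Stmt18Aux in
/-- Averaging a norm-one projection onto `F^⊥` over an invariant mean on `(ℝ, +)`:
if `F` is a closed `(αₜ)`-invariant subspace of `E` for a norm-continuous one-parameter
isometry group, and there exists a norm-one projection `e : E* → F^⊥`, then there exists
a norm-one projection `p : E* → F^⊥` commuting with the adjoint group: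
`p(μ ∘ αₜ) = (p μ) ∘ αₜ` for all `t`. -/
theorem stmt18 {E : Type*} [NormedAddCommGroup E] [NormedSpace ℂ E] [CompleteSpace E]
    (α : ℝ → E →L[ℂ] E)
    (hiso : ∀ t : ℝ, ∀ x : E, ‖α t x‖ = ‖x‖)
    (h0 : ∀ x : E, α 0 x = x)
    (hgrp : ∀ t s : ℝ, ∀ x : E, α t (α s x) = α (t + s) x)
    (hcont : ∀ x : E, Continuous fun t : ℝ => α t x)
    (F : Submodule ℂ E) (hFclosed : IsClosed (F : Set E))
    (hFinv : ∀ t : ℝ, ∀ x ∈ F, α t x ∈ F)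
    (e : (E →L[ℂ] ℂ) →L[ℂ] (E →L[ℂ] ℂ))
    (he_ann : ∀ μ : E →L[ℂ] ℂ, ∀ x ∈ F, e μ x = 0)
    (he_proj : ∀ μ : E →L[ℂ] ℂ, (∀ x ∈ F, μ x = 0) → e μ = μ)
    (he_norm : ‖e‖ = 1) :
    ∃ p : (E →L[ℂ] ℂ) →L[ℂ] (E →L[ℂ] ℂ),
      (∀ μ : E →L[ℂ] ℂ, ∀ x ∈ F, p μ x = 0) ∧
      (∀ μ : E →L[ℂ] ℂ, (∀ x ∈ F, μ x = 0) → p μ = μ) ∧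
      ‖p‖ = 1 ∧
      ∀ (t : ℝ) (μ : E →L[ℂ] ℂ), p (μ.comp (α t)) = (p μ).comp (α t) := by
  classical
  obtain ⟨Λ, hΛ⟩ := Stmt18Aux.exists_mean
  have hα1 : ∀ t : ℝ, ‖α t‖ ≤ 1 := fun t =>
    ContinuousLinearMap.opNorm_le_bound _ zero_le_one (fun x => by rw [hiso t x, one_mul])
  have hcompnorm : ∀ (t : ℝ) (μ : E →L[ℂ] ℂ), ‖μ.comp (α t)‖ ≤ ‖μ‖ := fun t μ =>
    (ContinuousLinearMap.opNorm_comp_le μ (α t)).trans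
      (by nlinarith [hα1 t, norm_nonneg μ])
  set G : (E →L[ℂ] ℂ) → E → ℝ → ℂ := fun μ x t => e (μ.comp (α t)) (α (-t) x) with hG
  have hGbdd : ∀ μ x t, ‖G μ x t‖ ≤ ‖μ‖ * ‖x‖ := by
    intro μ x t
    calc ‖e (μ.comp (α t)) (α (-t) x)‖
        ≤ ‖e (μ.comp (α t))‖ * ‖α (-t) x‖ := ContinuousLinearMap.le_opNorm _ _
    _ = ‖e (μ.comp (α t))‖ * ‖x‖ := by rw [hiso]
    _ ≤ (‖e‖ * ‖μ.comp (α t)‖) * ‖x‖ := by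
        gcongr
        exact ContinuousLinearMap.le_opNorm e _
    _ ≤ ‖μ‖ * ‖x‖ := by
        rw [he_norm, one_mul]
        exact mul_le_mul_of_nonneg_right (hcompnorm t μ) (norm_nonneg x)
  set pfun : (E →L[ℂ] ℂ) → (E →L[ℂ] ℂ) := fun μ =>
    LinearMap.mkContinuous
      { toFun := fun x => LamC Λ (G μ x)
        map_add' := by
          intro x y
          have h : G μ (x + y) = fun t => G μ x t + G μ y t := by
            funext t
            simp only [hG, map_add]
          show LamC Λ (G μ (x + y)) = LamC Λ (G μ x) + LamC Λ (G μ y)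
          rw [h, LamC_add (hGbdd μ x) (hGbdd μ y)]
        map_smul' := by
          intro c x
          have h : G μ (c • x) = fun t => c * G μ x t := by
            funext t
            simp only [hG, map_smul, smul_eq_mul]
          show LamC Λ (G μ (c • x)) = c • LamC Λ (G μ x)
          rw [h, LamC_smul (hGbdd μ x)]
          rfl }
      ‖μ‖ (fun x => LamC_norm_le hΛ (hGbdd μ x)) with hpfun
  have hpfun_apply : ∀ μ x, pfun μ x = LamC Λ (G μ x) := fun μ x => rfl
  have hpfun_norm : ∀ μ, ‖pfun μ‖ ≤ ‖μ‖ := fun μ =>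
    LinearMap.mkContinuous_norm_le _ (norm_nonneg μ) _
  set p : (E →L[ℂ] ℂ) →L[ℂ] (E →L[ℂ] ℂ) :=
    LinearMap.mkContinuous
      { toFun := pfun
        map_add' := by
          intro μ ν
          apply ContinuousLinearMap.ext
          intro x
          have h : G (μ + ν) x = fun t => G μ x t + G ν x t := by
            funext t
            simp only [hG, ContinuousLinearMap.add_comp, map_add,
              ContinuousLinearMap.add_apply]
          show LamC Λ (G (μ + ν) x) = LamC Λ (G μ x) + LamC Λ (G ν x)
          rw [h, LamC_add (hGbdd μ x) (hGbdd ν x)]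
        map_smul' := by
          intro c μ
          apply ContinuousLinearMap.ext
          intro x
          have h : G (c • μ) x = fun t => c * G μ x t := by
            funext t
            simp only [hG, ContinuousLinearMap.smul_comp, map_smul,
              ContinuousLinearMap.smul_apply, smul_eq_mul]
          show LamC Λ (G (c • μ) x) = c • LamC Λ (G μ x)
          rw [h, LamC_smul (hGbdd μ x)]
          rfl }
      1 (fun μ => by rw [one_mul]; exact hpfun_norm μ) with hp
  have hp_apply : ∀ μ x, p μ x = LamC Λ (G μ x) := fun μ x => rfl
  have hann : ∀ μ : E →L[ℂ] ℂ, ∀ x ∈ F, p μ x = 0 := by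
    intro μ x hx
    rw [hp_apply]
    have h : G μ x = fun _ => (0 : ℂ) := by
      funext t
      exact he_ann _ _ (hFinv (-t) x hx)
    rw [h, LamC_const hΛ 0]
  have hproj : ∀ μ : E →L[ℂ] ℂ, (∀ x ∈ F, μ x = 0) → p μ = μ := by
    intro μ hμ
    apply ContinuousLinearMap.ext
    intro x
    rw [hp_apply]
    have h : G μ x = fun _ => μ x := by
      funext t
      have h1 : e (μ.comp (α t)) = μ.comp (α t) :=
        he_proj _ (fun y hy => hμ _ (hFinv t y hy))
      simp only [hG, h1, ContinuousLinearMap.comp_apply]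
      rw [hgrp t (-t) x, add_neg_cancel, h0]
    rw [h, LamC_const hΛ]
  have hcomm : ∀ (s : ℝ) (μ : E →L[ℂ] ℂ), p (μ.comp (α s)) = (p μ).comp (α s) := by
    intro s μ
    apply ContinuousLinearMap.ext
    intro x
    have hxs : (p μ).comp (α s) x = LamC Λ (G μ (α s x)) := rfl
    rw [hxs, hp_apply]
    have hkey : G (μ.comp (α s)) x = fun t => G μ (α s x) (t + s) := by
      funext t
      have hA : (μ.comp (α s)).comp (α t) = μ.comp (α (t + s)) := by
        apply ContinuousLinearMap.ext
        intro y
        simp only [ContinuousLinearMap.comp_apply]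
        rw [hgrp s t y, add_comm s t]
      have hB : α (-(t + s)) (α s x) = α (-t) x := by
        rw [hgrp (-(t + s)) s x]
        congr 1
        ring
      simp only [hG, hA, hB]
    rw [hkey, LamC_shift hΛ (hGbdd μ (α s x)) s]
  have hnorm : ‖p‖ = 1 := by
    have hle : ‖p‖ ≤ 1 := LinearMap.mkContinuous_norm_le _ zero_le_one _
    have hno : ∃ μ : E →L[ℂ] ℂ, e μ ≠ 0 := by
      by_contra h
      push_neg at h
      have : e = 0 := ContinuousLinearMap.ext fun μ => by rw [h μ]; rfl
      rw [this, ContinuousLinearMap.opNorm_zero] at he_norm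
      norm_num at he_norm
    obtain ⟨μ0, hμ0⟩ := hno
    set ν := e μ0 with hν
    have hνF : ∀ x ∈ F, ν x = 0 := he_ann μ0
    have hpν : p ν = ν := hproj ν hνF
    have hν0 : 0 < ‖ν‖ := norm_pos_iff.mpr hμ0
    have h1 : ‖ν‖ ≤ ‖p‖ * ‖ν‖ := by
      conv_lhs => rw [← hpν]
      exact ContinuousLinearMap.le_opNorm p ν
    have hge : 1 ≤ ‖p‖ := by
      by_contra h
      push_neg at h
      nlinarith
    linarith
  exact ⟨p, hann, hproj, hnorm, hcomm⟩
end
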